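/- arXiv:2011.05198 — 2 statements merged into one kernel-verified Lean document; each statement's English description precedes it below -/
import Mathlib

section
/- The idempotent e = (1/2)(1⊗1 + (1/p₀)·j⊗√p₀) is fixed by the involution x ↦ x† = i⁻¹x̄i extended M-linearly to B ⊗_ℚ M, i.e. e† = e. -/
open Quaternion

/-- The idempotent `e = (1/2)(1⊗1 + (1/p₀)·j⊗√p₀)` is fixed by the involution
`x ↦ x† = i⁻¹·x̄·i` extended `M`-linearly to `B ⊗_ℚ M`, i.e. `e† = e`.
We model `B ⊗_ℚ M` as `ℍ[M, -pN⁻, p₀]` over the field `M = ℚ(√p₀)`, with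
`x† = (-pN⁻)⁻¹ • (i * star x * i)` (as `i⁻¹ = (-pN⁻)⁻¹ • i`). -/
theorem stmt_2 (M : Type*) [Field M] [Algebra ℚ M]
    (pN p₀ : M) (hpN : pN ≠ 0) (hp₀ : p₀ ≠ 0)
    (s : M) (hs : s ^ 2 = p₀)
    (ι : ℍ[M, -pN, p₀]) (hι : ι = ⟨0, 1, 0, 0⟩)
    (dag : ℍ[M, -pN, p₀] → ℍ[M, -pN, p₀])
    (hdag : ∀ x, dag x = (-pN)⁻¹ • (ι * star x * ι))
    (e : ℍ[M, -pN, p₀])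
    (he : e = (1 / 2 : M) • (1 + (s / p₀) • (⟨0, 0, 1, 0⟩ : ℍ[M, -pN, p₀]))) :
    dag e = e := by
  subst hι he
  rw [hdag]
  ext <;> simp [QuaternionAlgebra.ext_iff, QuaternionAlgebra.re_mul, QuaternionAlgebra.imI_mul,
    QuaternionAlgebra.imJ_mul, QuaternionAlgebra.imK_mul] <;> rw [← mul_assoc, inv_mul_cancel₀ hpN, one_mul]
end

section
/- For the second-order structure above, define G_j(z) = ⟨F(z), ω_can^j η_can^{n-j}⟩ ⊗ ω_can^{n-2j} where ω_can, η_can satisfy ⟨ω_can, η_can⟩ = 1, ∇(ω_can) = (-ω_can/(z*-z) + η_can) ⊗ dz, ∇(η_can) = -ω_can⊗dz*/(z*-z)² + η_can⊗dz/(z*-z), and ∇(F) = f(z)dz ⊗ ω_can^n. Then applying the connection, using the Kodaira-Spencer identification dz ↔ ω_can², and then the projection Ψ killing η_can and dz*, one obtains Θ_p(G_j) = j·G_{j-1} for 1 ≤ j ≤ n, and Θ_p(G_0) = f(z) ⊗ ω_can^{n+2}. -/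
/-- (the computational core of Theorem 8.1 of the paper).
Abstract setting: `S` is the symmetric algebra (a commutative `A`-algebra) containing the
canonical sections `ω = ω_can` and `η = η_can`, with symplectic pairing `Pair` satisfying
`⟨ω^n, η^n⟩ = 1` (and orthogonality in the other weights), and a connection
`nabla : S → S × S` (components along `dz` and `dz*`) satisfying the Leibniz rule,
with the displayed values `nablaω = (ω/(z-z*) + η)·dz`, `nablaη = η/(z-z*)·dz·(-1)·…` i.e.
`nablaω = (w•ω + η, 0)`, `nablaη = (-(w•η), -((w*w)•ω))` where `w = 1/(z - z*)`, and
`nablaF = f·dz ⊗ ω^n`.  Setting `G_j = ⟨F, ω^j η^{n-j}⟩ ⊗ ω^{n-2j}`, with scalar part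
`g j = Pair F (ω^j η^{n-j})`, and letting `Θ_p` be `Ψ ∘ KS⁻¹ ∘ nabla` — which on a scalar of
weight `k` is `Θ k x = D x + k·x/(z - z*)` (the Kodaira–Spencer identification `dz ↔ ω²`
followed by the projection `Ψ` killing `η_can` and `dz*`) — one obtains
`Θ_p(G_j) = j·G_{j-1}` for `1 ≤ j ≤ n` and `Θ_p(G_0) = f ⊗ ω^{n+2}`. -/
theorem stmt_8 (A : Type*) [CommRing A]
    (S : Type*) [CommRing S] [Algebra A S]
    (D Ds : A → A) (z zs w : A) (hw : w * (z - zs) = 1)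
    (ω η : S) (nabla : S → S × S)
    (hadd : ∀ x y : S, nabla (x + y) = nabla x + nabla y)
    (hLeib : ∀ x y : S, nabla (x * y) = x • nabla y + y • nabla x)
    (hscal : ∀ a : A, nabla (algebraMap A S a) = (algebraMap A S (D a), algebraMap A S (Ds a)))
    (hω : nabla ω = (w • ω + η, 0))
    (hη : nabla η = (-(w • η), -((w * w) • ω)))
    (Pair : S →ₗ[A] S →ₗ[A] A)
    (hPairD : ∀ x y : S, D (Pair x y) = Pair (nabla x).1 y + Pair x (nabla y).1)
    (n : ℕ) (F : S) (f : A)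
    (hF : nabla F = (f • ω ^ n, 0))
    (hOrth : ∀ j ≤ n, Pair (ω ^ n) (ω ^ j * η ^ (n - j)) = if j = 0 then 1 else 0)
    (g : ℕ → A) (hg : ∀ j : ℕ, g j = Pair F (ω ^ j * η ^ (n - j)))
    (Θ : ℤ → A → A) (hΘ : ∀ (k : ℤ) (x : A), Θ k x = D x + (k : A) * (w * x)) :
    (∀ j : ℕ, 1 ≤ j → j ≤ n →
      Θ ((n : ℤ) - 2 * (j : ℤ)) (g j) = (j : A) * g (j - 1)) ∧
    Θ (n : ℤ) (g 0) = f := by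
  have h1 : nabla (1 : S) = 0 := by
    have h := hLeib 1 1
    rw [mul_one, one_smul] at h
    exact right_eq_add.mp h
  have hηpow : ∀ m : ℕ, (nabla (η ^ m)).1 = (-((m : A) * w)) • η ^ m := by
    intro m
    induction m with
    | zero => simp [h1]
    | succ m ih =>
      have h := congrArg Prod.fst (hLeib η (η ^ m))
      rw [← pow_succ'] at h
      simp only [Prod.fst_add, Prod.smul_fst, smul_eq_mul] at h
      rw [h, ih, hη]
      show η * (_ • η ^ m) + η ^ m * (-(w • η)) = _
      simp only [Algebra.smul_def, map_mul, map_natCast, map_neg, map_add, map_one,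
        Nat.cast_succ]
      ring
  have hωpow : ∀ k : ℕ, (nabla (ω ^ (k + 1))).1
      = ((((k : A) + 1) * w) • ω ^ (k + 1) + ((k : A) + 1) • (ω ^ k * η)) := by
    intro k
    induction k with
    | zero =>
      rw [pow_one, hω]
      simp [Algebra.smul_def]
    | succ k ih =>
      have h := congrArg Prod.fst (hLeib ω (ω ^ (k + 1)))
      rw [← pow_succ'] at h
      simp only [Prod.fst_add, Prod.smul_fst, smul_eq_mul] at h
      rw [h, ih, hω]
      show ω * _ + ω ^ (k + 1) * (w • ω + η) = _
      simp only [Algebra.smul_def, map_mul, map_natCast, map_add, map_one, Nat.cast_succ]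
      ring
  have hkey : ∀ k m : ℕ, Pair F (nabla (ω ^ (k + 1) * η ^ m)).1
      = (((k : A) + 1 - (m : A)) * w) * Pair F (ω ^ (k + 1) * η ^ m)
        + ((k : A) + 1) * Pair F (ω ^ k * η ^ (m + 1)) := by
    intro k m
    have h := congrArg Prod.fst (hLeib (ω ^ (k + 1)) (η ^ m))
    simp only [Prod.fst_add, Prod.smul_fst, smul_eq_mul] at h
    rw [h, hηpow, hωpow]
    have e : ω ^ (k + 1) * ((-((m : A) * w)) • η ^ m)
        + η ^ m * ((((k : A) + 1) * w) • ω ^ (k + 1) + ((k : A) + 1) • (ω ^ k * η))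
        = (((k : A) + 1 - (m : A)) * w) • (ω ^ (k + 1) * η ^ m)
          + ((k : A) + 1) • (ω ^ k * η ^ (m + 1)) := by
      simp only [Algebra.smul_def, map_mul, map_natCast, map_sub, map_add, map_one, map_neg]
      ring
    rw [e, map_add, map_smul, map_smul, smul_eq_mul, smul_eq_mul]
  constructor
  · rintro j hj1 hjn
    obtain ⟨k, rfl⟩ : ∃ k, j = k + 1 := ⟨j - 1, (Nat.succ_pred_eq_of_pos hj1).symm⟩
    have hD := hPairD F (ω ^ (k + 1) * η ^ (n - (k + 1)))
    rw [hF] at hD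
    simp only [map_smul, LinearMap.smul_apply, smul_eq_mul] at hD
    rw [hkey k (n - (k + 1)), hOrth (k + 1) hjn, if_neg (Nat.succ_ne_zero k)] at hD
    have hsub : n - (k + 1) + 1 = n - k := by omega
    rw [hsub] at hD
    have hm : ((n - (k + 1) : ℕ) : A) = (n : A) - ((k : A) + 1) := by
      rw [Nat.cast_sub hjn]; push_cast; ring
    rw [hΘ, hg, Nat.add_sub_cancel, hg, hD, hm]
    push_cast
    ring
  · have hD := hPairD F (η ^ n)
    rw [hF, hηpow n] at hD
    simp only [map_smul, LinearMap.smul_apply, smul_eq_mul] at hD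
    have hO := hOrth 0 (Nat.zero_le n)
    simp only [pow_zero, one_mul, Nat.sub_zero, if_pos rfl] at hO
    rw [hΘ, hg]
    simp only [pow_zero, one_mul, Nat.sub_zero]
    rw [hD, hO]
    push_cast
    ring
end
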